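/- Let n, d be positive integers. Let r(d,n) be the largest divisor of d coprime to n, and set s(d,n) = d/r(d,n). Then the polynomial Φ_n(X^d) factors as the product of cyclotomic polynomials Φ_n(X^d) = ∏_{r ∣ r(d,n)} Φ_{r·n·s(d,n)}(X), the product ranging over all positive divisors r of r(d,n). -/

import Mathlib

open Polynomial

lemma aux_dvd14 {p m : ℕ} (hp : p.Prime) (hpm : p ∣ m) (k : ℕ) :
    Polynomial.expand ℤ (p ^ k) (cyclotomic m ℤ) = cyclotomic (p ^ k * m) ℤ := by
  induction k with
  | zero => simp
  | succ k ih =>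
    rw [pow_succ', ← expand_expand, ih,
      cyclotomic_expand_eq_cyclotomic hp (dvd_mul_of_dvd_right hpm _)]
    congr 1
    ring

lemma aux_pow14 {p m : ℕ} (hp : p.Prime) (hpm : ¬ p ∣ m) (k : ℕ) :
    Polynomial.expand ℤ (p ^ k) (cyclotomic m ℤ)
      = ∏ i ∈ Finset.range (k + 1), cyclotomic (p ^ i * m) ℤ := by
  induction k with
  | zero => simp
  | succ k ih =>
    rw [pow_succ, ← expand_expand, cyclotomic_expand_eq_cyclotomic_mul hp hpm, map_mul,
      aux_dvd14 hp (dvd_mul_left p m), ih,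
      show p ^ k * (m * p) = p ^ (k + 1) * m by ring]
    conv_rhs => rw [Finset.prod_range_succ]
    exact mul_comm _ _

lemma gcd_helper14 {x y a : ℕ} (hx : x ∣ a) (hya : Nat.Coprime y a) :
    Nat.gcd (x * y) a = x :=
  Nat.dvd_antisymm
    (Nat.Coprime.dvd_of_dvd_mul_right
      (Nat.Coprime.coprime_dvd_left (Nat.gcd_dvd_right (x * y) a) hya.symm)
      (Nat.gcd_dvd_left _ _))
    (Nat.dvd_gcd (dvd_mul_right x y) hx)

lemma aux_prod14 {M : Type*} [CommMonoid M] (a b : ℕ) (hab : Nat.Coprime a b) (f : ℕ → M) :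
    ∏ t ∈ (a * b).divisors, f t = ∏ x ∈ a.divisors, ∏ y ∈ b.divisors, f (x * y) := by
  rw [← Finset.prod_product']
  refine Finset.prod_nbij' (fun t => (t.gcd a, t.gcd b)) (fun p => p.1 * p.2) ?_ ?_ ?_ ?_ ?_
  · intro t ht
    rw [Nat.mem_divisors] at ht
    have ha : a ≠ 0 := fun h => ht.2 (by simp [h])
    have hb : b ≠ 0 := fun h => ht.2 (by simp [h])
    simp only [Finset.mem_product, Nat.mem_divisors]
    exact ⟨⟨Nat.gcd_dvd_right _ _, ha⟩, ⟨Nat.gcd_dvd_right _ _, hb⟩⟩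
  · intro p hp
    simp only [Finset.mem_product, Nat.mem_divisors] at hp
    exact Nat.mem_divisors.2 ⟨mul_dvd_mul hp.1.1 hp.2.1, mul_ne_zero hp.1.2 hp.2.2⟩
  · intro t ht
    rw [Nat.mem_divisors] at ht
    exact (Nat.gcd_mul_gcd_eq_iff_dvd_mul_of_coprime hab).2 ht.1
  · intro p hp
    simp only [Finset.mem_product, Nat.mem_divisors] at hp
    have h1 : Nat.gcd (p.1 * p.2) a = p.1 :=
      gcd_helper14 hp.1.1 ((Nat.Coprime.coprime_dvd_right hp.2.1 hab).symm)
    have h2 : Nat.gcd (p.1 * p.2) b = p.2 := by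
      rw [mul_comm]
      exact gcd_helper14 hp.2.1 (Nat.Coprime.coprime_dvd_right hp.1.1 hab.symm).symm
    simp [h1, h2]
  · intro t ht
    rw [Nat.mem_divisors] at ht
    simp only
    congr 1
    exact ((Nat.gcd_mul_gcd_eq_iff_dvd_mul_of_coprime hab).2 ht.1).symm

lemma main14 (d : ℕ) : ∀ n r s : ℕ, 0 < n → 0 < d → d = r * s → Nat.Coprime r n →
    (∀ p : ℕ, p.Prime → p ∣ s → p ∣ n) →
    Polynomial.expand ℤ d (cyclotomic n ℤ)
      = ∏ t ∈ Nat.divisors r, cyclotomic (t * n * s) ℤ := by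
  induction d using Nat.strong_induction_on with
  | _ d ih =>
    intro n r s hn hd hrs hr hs
    have hr0 : r ≠ 0 := by rintro rfl; rw [zero_mul] at hrs; omega
    have hs0 : s ≠ 0 := by rintro rfl; rw [mul_zero] at hrs; omega
    rcases eq_or_ne d 1 with h1 | h1
    · subst h1
      have hr1 : r = 1 := Nat.eq_one_of_dvd_one ⟨s, hrs⟩
      have hs1 : s = 1 := Nat.eq_one_of_dvd_one ⟨r, hrs.trans (mul_comm r s)⟩
      subst hr1; subst hs1
      simp
    · obtain ⟨p, hp, hpd⟩ := Nat.exists_prime_and_dvd h1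
      by_cases hpn : p ∣ n
      · -- p divides n, hence p divides s
        have hps : p ∣ s := by
          rcases (Nat.Prime.dvd_mul hp).1 (hrs ▸ hpd) with h | h
          · have hc : Nat.Coprime p n := Nat.Coprime.coprime_dvd_left h hr
            exact absurd (Nat.eq_one_of_dvd_one (hc ▸ Nat.dvd_gcd dvd_rfl hpn)) hp.ne_one
          · exact h
        obtain ⟨s', rfl⟩ := hps
        have hs'0 : s' ≠ 0 := by rintro rfl; simp at hs0
        have hpos : 0 < r * s' := Nat.pos_of_ne_zero (mul_ne_zero hr0 hs'0)
        have hd' : r * s' < d := by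
          have hdd : d = p * (r * s') := by rw [hrs]; ring
          rw [hdd]
          exact (Nat.lt_mul_iff_one_lt_left hpos).2 hp.one_lt
        have key : Polynomial.expand ℤ d (cyclotomic n ℤ)
            = Polynomial.expand ℤ (r * s') (Polynomial.expand ℤ p (cyclotomic n ℤ)) := by
          rw [expand_expand]
          congr 1
          rw [hrs]; ring
        rw [key, cyclotomic_expand_eq_cyclotomic hp hpn,
          ih (r * s') hd' (n * p) r s' (Nat.mul_pos hn hp.pos) hpos rfl
            (Nat.Coprime.mul_right hr (Nat.Coprime.coprime_dvd_right hpn hr))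
            (fun q hq hq' => Dvd.dvd.mul_right (hs q hq (dvd_mul_of_dvd_right hq' p)) p)]
        exact Finset.prod_congr rfl fun t _ => by congr 1; ring
      · -- p does not divide n, hence p divides r
        have hpr : p ∣ r := by
          rcases (Nat.Prime.dvd_mul hp).1 (hrs ▸ hpd) with h | h
          · exact h
          · exact absurd (hs p hp h) hpn
        set k := r.factorization p with hk
        have hkpos : 0 < k := hp.factorization_pos_of_dvd hr0 hpr
        set r' := r / p ^ k with hr'
        have hrr : r = p ^ k * r' := (Nat.ordProj_mul_ordCompl_eq_self r p).symm
        have hpr' : ¬ p ∣ r' := Nat.not_dvd_ordCompl hp hr0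
        have hr'0 : r' ≠ 0 := fun h => hr0 (by rw [hrr, h, mul_zero])
        have hpos : 0 < r' * s := Nat.pos_of_ne_zero (mul_ne_zero hr'0 hs0)
        have hd' : r' * s < d := by
          have hdd : d = p ^ k * (r' * s) := by rw [hrs, hrr]; ring
          rw [hdd]
          exact (Nat.lt_mul_iff_one_lt_left hpos).2 (Nat.one_lt_pow hkpos.ne' hp.one_lt)
        have key : Polynomial.expand ℤ d (cyclotomic n ℤ)
            = Polynomial.expand ℤ (r' * s) (Polynomial.expand ℤ (p ^ k) (cyclotomic n ℤ)) := by
          rw [expand_expand]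
          congr 1
          rw [hrs, hrr]; ring
        have hcpr' : Nat.Coprime (p ^ k) r' :=
          Nat.Coprime.pow_left k ((Nat.Prime.coprime_iff_not_dvd hp).2 hpr')
        rw [key, aux_pow14 hp hpn k, map_prod, hrr, aux_prod14 _ _ hcpr',
          Nat.prod_divisors_prime_pow hp]
        refine Finset.prod_congr rfl fun i _ => ?_
        rw [ih (r' * s) hd' (p ^ i * n) r' s
          (Nat.mul_pos (pow_pos hp.pos i) hn) hpos rfl
          (Nat.Coprime.mul_right
            (Nat.Coprime.pow_right i ((Nat.Prime.coprime_iff_not_dvd hp).2 hpr').symm)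
            (Nat.Coprime.coprime_dvd_left (Dvd.intro_left _ hrr.symm) hr))
          (fun q hq hq' => Dvd.dvd.mul_left (hs q hq hq') (p ^ i))]
        exact Finset.prod_congr rfl fun t _ => by congr 1; ring

theorem statement14
    (n d : ℕ) (hn : 0 < n) (hd : 0 < d)
    (r s : ℕ) (hrs : d = r * s)
    (hr : Nat.Coprime r n)
    (hs : ∀ p : ℕ, p.Prime → p ∣ s → p ∣ n) :
    (Polynomial.cyclotomic n ℤ).comp (Polynomial.X ^ d)
      = ∏ t ∈ Nat.divisors r, Polynomial.cyclotomic (t * n * s) ℤ := by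
  rw [← Polynomial.expand_eq_comp_X_pow]
  exact main14 d n r s hn hd hrs hr hs
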